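/- The program NQUEENS is complete w.r.t. the specification S⁰ = S_pq ∪ S⁰_pqs ∪ { pqs(0,cs,us,ds) : cs,us,ds ground }: every atom of S⁰ belongs to the least Herbrand model of NQUEENS. -/

import Mathlib

/-- Ground terms of the Herbrand universe: numerals built from `zero`/`succ`,
list constructors `cons`/`nil`, and infinitely many other constants `sym n`. -/
inductive Term : Type
  | zero : Term
  | succ : Term → Term
  | cons : Term → Term → Term
  | nil  : Term
  | sym  : ℕ → Term
deriving DecidableEq

/-- The numeral `sⁱ(0)` representing a natural number. -/
def num : ℕ → Term
  | 0 => Term.zero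
  | n + 1 => Term.succ (num n)

/-- `NthMember k e t` : `e` is the `k`-th member (k ≥ 1) of the term `t`,
i.e. `t = [e₁,…,e_{k-1}, e | t']`. -/
def NthMember : ℕ → Term → Term → Prop
  | 0, _, _ => False
  | 1, e, t => ∃ r, t = Term.cons e r
  | k + 2, e, t => ∃ h r, t = Term.cons h r ∧ NthMember (k + 1) e r

/-- `e` is a member of the term `t`. -/
def IsMember (e t : Term) : Prop := ∃ k, NthMember k e t

/-- `t` is a (proper, nil-terminated) list. -/
inductive IsList : Term → Prop
  | nil : IsList Term.nil
  | cons (h t : Term) : IsList t → IsList (Term.cons h t)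

/-- The members of `cs` are pairwise distinct (no member occurs at two positions). -/
def DistinctMembers (cs : Term) : Prop :=
  ∀ k1 k2 e, NthMember k1 e cs → NthMember k2 e cs → k1 = k2

/-- `(cs,us,ds)` represents a correct placement of queens `1,…,m`
in the context of row `i` (Definition 3 of the paper):
`cs` is a list of distinct members containing `1,…,m`; the up diagonal
numbers `k+j-i` and down diagonal numbers `k+i-j` of the queens `1,…,m`
(queen `j` being the `k`-th member of `cs`) are pairwise distinct; and every
positive such diagonal number `l` of queen `j` is reflected by `j` being the
`l`-th member of `us` (resp. `ds`). -/
def CorrectUpTo (m i : ℕ) (cs us ds : Term) : Prop :=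
  m ≤ i ∧
  IsList cs ∧ DistinctMembers cs ∧
  (∀ j, 1 ≤ j → j ≤ m → IsMember (num j) cs) ∧
  (∀ j1 j2 k1 k2, 1 ≤ j1 → j1 ≤ m → 1 ≤ j2 → j2 ≤ m →
     NthMember k1 (num j1) cs → NthMember k2 (num j2) cs →
     (k1 + j1 : ℤ) - i = (k2 + j2 : ℤ) - i → j1 = j2) ∧
  (∀ j1 j2 k1 k2, 1 ≤ j1 → j1 ≤ m → 1 ≤ j2 → j2 ≤ m →
     NthMember k1 (num j1) cs → NthMember k2 (num j2) cs →
     (k1 + i : ℤ) - j1 = (k2 + i : ℤ) - j2 → j1 = j2) ∧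
  (∀ j k (l : ℤ), 1 ≤ j → j ≤ m → NthMember k (num j) cs →
     (k + j : ℤ) - i = l → 0 < l → NthMember l.toNat (num j) us) ∧
  (∀ j k (l : ℤ), 1 ≤ j → j ≤ m → NthMember k (num j) cs →
     (k + i : ℤ) - j = l → 0 < l → NthMember l.toNat (num j) ds)

/-- Ground atoms of the n-queens program. -/
inductive Atom : Type
  | pq  (i cs us ds : Term)
  | pqs (i cs us ds : Term)
deriving DecidableEq

/-- A ground clause: a head together with the list of body atoms. -/
abbrev Clause := Atom × List Atom

/-- A (ground instantiation of a) definite program. -/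
abbrev Program := Set Clause

/-- `S` is an Herbrand model of `P`. -/
def IsModel (S : Set Atom) (P : Program) : Prop :=
  ∀ c ∈ P, (∀ b ∈ c.2, b ∈ S) → c.1 ∈ S

/-- The least Herbrand model of `P`. -/
def LHM (P : Program) : Set Atom := ⋂₀ {S | IsModel S P}

/-- A ground atom `A` is covered by program `P` w.r.t. specification `S`. -/
def Covered (P : Program) (S : Set Atom) (A : Atom) : Prop :=
  ∃ c ∈ P, c.1 = A ∧ ∀ b ∈ c.2, b ∈ S

/-- The set of ground instances of the two pq clauses:
`pq(I,[I|_],[I|_],[I|_])` and `pq(I,[_|Cs],[_|Us],[_|Ds]) ← pq(I,Cs,Us,Ds)`. -/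
def PQprog : Program :=
  {c | (∃ i x y z, c = (Atom.pq i (Term.cons i x) (Term.cons i y) (Term.cons i z), [])) ∨
       (∃ i c' cs u us d ds,
          c = (Atom.pq i (Term.cons c' cs) (Term.cons u us) (Term.cons d ds),
               [Atom.pq i cs us ds]))}

/-- The set of ground instances of the four clauses of NQUEENS. -/
def NQprog : Program :=
  {c | (∃ x y z, c = (Atom.pqs Term.zero x y z, [])) ∨
       (∃ i cs us u d ds,
          c = (Atom.pqs (Term.succ i) cs us (Term.cons d ds),
               [Atom.pqs i cs (Term.cons u us) ds, Atom.pq (Term.succ i) cs us ds])) ∨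
       (∃ i x y z, c = (Atom.pq i (Term.cons i x) (Term.cons i y) (Term.cons i z), [])) ∨
       (∃ i c' cs u us d ds,
          c = (Atom.pq i (Term.cons c' cs) (Term.cons u us) (Term.cons d ds),
               [Atom.pq i cs us ds]))}

/-- The specification `S_pq`. -/
def Spq : Set Atom :=
  {a | ∃ i cs us ds k, a = Atom.pq i cs us ds ∧ 0 < k ∧
       NthMember k i cs ∧ NthMember k i us ∧ NthMember k i ds}

/-- The correctness specification `S_pqs`. -/
def Spqs : Set Atom :=
  {a | (∃ cs us ds, a = Atom.pqs Term.zero cs us ds) ∨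
       (∃ i cs us t ds, 0 < i ∧ a = Atom.pqs (num i) cs us (Term.cons t ds) ∧
          (∀ j, 1 ≤ j → j ≤ i → IsMember (num j) cs) ∧
          (IsList cs → DistinctMembers cs → CorrectUpTo i i cs us ds))}

/-- The completeness specification `S⁰_pqs`. -/
def S0pqs : Set Atom :=
  {a | ∃ i cs us t ds, 0 < i ∧ a = Atom.pqs (num i) cs us (Term.cons t ds) ∧
        CorrectUpTo i i cs us ds}

/-- All atoms `pqs(0,cs,us,ds)`. -/
def SpqsZero : Set Atom :=
  {a | ∃ cs us ds, a = Atom.pqs Term.zero cs us ds}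

/-- The level mapping on ground terms: `|[h|t]| = 1+|t|`, `|s(t)| = 1+|t|`,
`|f(…)| = 0` otherwise. -/
def tlvl : Term → ℕ
  | Term.cons _ t => 1 + tlvl t
  | Term.succ t => 1 + tlvl t
  | _ => 0

/-- The level mapping on ground atoms. -/
def alvl : Atom → ℕ
  | Atom.pqs i cs _ _ => tlvl i + tlvl cs
  | Atom.pq _ cs _ _ => tlvl cs

/-- `t` is a list of length `n`. -/
inductive IsListLen : Term → ℕ → Prop
  | nil : IsListLen Term.nil 0
  | cons (h t : Term) (n : ℕ) : IsListLen t n → IsListLen (Term.cons h t) (n + 1)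

lemma mem_LHM {P : Program} {A : Atom} : A ∈ LHM P ↔ ∀ S, IsModel S P → A ∈ S := by
  simp [LHM, Set.mem_sInter, Set.mem_setOf_eq]

lemma nthMember_pos {k : ℕ} {e t : Term} (h : NthMember k e t) : 1 ≤ k := by
  cases k with
  | zero => exact absurd h (by simp [NthMember])
  | succ n => omega

lemma nthMember_succ_cons {n : ℕ} (hn : 1 ≤ n) {e h t : Term} :
    NthMember (n + 1) e (Term.cons h t) ↔ NthMember n e t := by
  obtain ⟨m, rfl⟩ : ∃ m, n = m + 1 := ⟨n - 1, by omega⟩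
  constructor
  · rintro ⟨h', r, heq, hm⟩
    injection heq with h1 h2
    subst h2; exact hm
  · intro hm; exact ⟨h, t, rfl, hm⟩

lemma nthMember_cons_shape {k : ℕ} {e t : Term} (h : NthMember k e t) :
    ∃ h' r, t = Term.cons h' r := by
  match k, h with
  | 1, ⟨r, ht⟩ => exact ⟨e, r, ht⟩
  | k + 2, ⟨h', r, ht, _⟩ => exact ⟨h', r, ht⟩

lemma spq_lhm : ∀ k i cs us ds, 0 < k → NthMember k i cs → NthMember k i us →
    NthMember k i ds → Atom.pq i cs us ds ∈ LHM NQprog := by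
  intro k
  induction k using Nat.strong_induction_on with
  | _ k ih =>
    match k with
    | 0 => intro i cs us ds hk; omega
    | 1 =>
      rintro i cs us ds _ ⟨x, rfl⟩ ⟨y, rfl⟩ ⟨z, rfl⟩
      rw [mem_LHM]; intro S hS
      exact hS _ (Or.inr (Or.inr (Or.inl ⟨i, x, y, z, rfl⟩))) (by simp)
    | n + 2 =>
      rintro i cs us ds _ ⟨hc, rc, rfl, hcs⟩ ⟨hu, ru, rfl, hus⟩ ⟨hd, rd, rfl, hds⟩
      have hrec := ih (n + 1) (by omega) i rc ru rd (by omega) hcs hus hds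
      rw [mem_LHM]; intro S hS
      refine hS (Atom.pq i (Term.cons hc rc) (Term.cons hu ru) (Term.cons hd rd),
                 [Atom.pq i rc ru rd])
        (Or.inr (Or.inr (Or.inr ⟨i, hc, rc, hu, ru, hd, rd, rfl⟩))) ?_
      intro b hb
      simp only [List.mem_singleton] at hb; subst hb
      exact mem_LHM.mp hrec S hS

lemma s0_lhm : ∀ i cs us t ds, 0 < i → CorrectUpTo i i cs us ds →
    Atom.pqs (num i) cs us (Term.cons t ds) ∈ LHM NQprog := by
  intro i
  induction i with
  | zero => intro cs us t ds h; omega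
  | succ m ih =>
    intro cs us t ds _ hC
    obtain ⟨hmi, hlist, hdist, hmem, hup, hdown, hus, hds⟩ := hC
    -- the pq body atom
    have hpq : Atom.pq (num (m + 1)) cs us ds ∈ LHM NQprog := by
      obtain ⟨k, hk⟩ := hmem (m + 1) (by omega) le_rfl
      have hk1 : 1 ≤ k := nthMember_pos hk
      have hu : NthMember k (num (m + 1)) us := by
        have h := hus (m + 1) k (k : ℤ) (by omega) le_rfl hk (by push_cast; ring)
          (by exact_mod_cast hk1)
        simpa using h
      have hd : NthMember k (num (m + 1)) ds := by
        have h := hds (m + 1) k (k : ℤ) (by omega) le_rfl hk (by push_cast; ring)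
          (by exact_mod_cast hk1)
        simpa using h
      exact spq_lhm k _ _ _ _ (by omega) hk hu hd
    -- the pqs body atom
    have hbody : ∃ u, Atom.pqs (num m) cs (Term.cons u us) ds ∈ LHM NQprog := by
      rcases Nat.eq_zero_or_pos m with hm | hm
      · subst hm
        refine ⟨Term.nil, ?_⟩
        rw [mem_LHM]; intro S hS
        exact hS _ (Or.inl ⟨_, _, _, rfl⟩) (by simp)
      · -- ds is nonempty: queen 1 has positive down diagonal
        obtain ⟨k1, hk1m⟩ := hmem 1 le_rfl (by omega)
        have hk11 : 1 ≤ k1 := nthMember_pos hk1m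
        have hd1 : NthMember (k1 + m) (num 1) ds := by
          have h := hds 1 k1 ((k1 + m : ℕ) : ℤ) le_rfl (by omega) hk1m
            (by push_cast; ring) (by push_cast; omega)
          have e : ((k1 + m : ℕ) : ℤ).toNat = k1 + m := by omega
          rw [e] at h; exact h
        obtain ⟨d, ds', rfl⟩ := nthMember_cons_shape hd1
        -- choose u
        have hu_ex : ∃ u, ∀ j k, 1 ≤ j → j ≤ m → NthMember k (num j) cs →
            (k : ℤ) + j = m + 1 → u = num j := by
          by_cases hP : ∃ j k, 1 ≤ j ∧ j ≤ m ∧ NthMember k (num j) cs ∧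
              (k : ℤ) + j = m + 1
          · obtain ⟨j0, k0, hj01, hj0m, hn0, he0⟩ := hP
            refine ⟨num j0, fun j k h1 h2 hn he => ?_⟩
            have hj := hup j0 j k0 k hj01 (by omega) h1 (by omega) hn0 hn
              (by push_cast; omega)
            rw [hj]
          · exact ⟨Term.nil, fun j k h1 h2 hn he => absurd ⟨j, k, h1, h2, hn, he⟩ hP⟩
        obtain ⟨u, hu_spec⟩ := hu_ex
        have hC' : CorrectUpTo m m cs (Term.cons u us) ds' := by
          refine ⟨le_rfl, hlist, hdist, fun j h1 h2 => hmem j h1 (by omega), ?_, ?_, ?_, ?_⟩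
          · intro j1 j2 ka kb a b c d' e f heq
            exact hup j1 j2 ka kb a (by omega) c (by omega) e f (by push_cast at heq ⊢; omega)
          · intro j1 j2 ka kb a b c d' e f heq
            exact hdown j1 j2 ka kb a (by omega) c (by omega) e f (by push_cast at heq ⊢; omega)
          · intro j k l h1 h2 hn hl hlpos
            by_cases h0 : (k : ℤ) + j = m + 1
            · have hl1 : l = 1 := by omega
              have hu := hu_spec j k h1 h2 hn h0
              have : l.toNat = 1 := by omega
              rw [this]
              exact ⟨us, by rw [hu]⟩
            · have hge : m + 2 ≤ k + j := by omega
              set n0 : ℕ := k + j - (m + 1) with hn0def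
              have h1n : 1 ≤ n0 := by omega
              have hold := hus j k (n0 : ℤ) h1 (by omega) hn (by push_cast; omega)
                (by exact_mod_cast h1n)
              have ht : l.toNat = n0 + 1 := by omega
              rw [ht, nthMember_succ_cons h1n]
              simpa using hold
          · intro j k l h1 h2 hn hl hlpos
            have hold := hds j k (l + 1) h1 (by omega) hn (by push_cast; omega) (by omega)
            have ht : (l + 1).toNat = l.toNat + 1 := by omega
            rw [ht, nthMember_succ_cons (by omega)] at hold
            exact hold
        exact ⟨u, ih cs (Term.cons u us) d ds' hm hC'⟩
    obtain ⟨u, hbody⟩ := hbody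
    rw [mem_LHM]; intro S hS
    refine hS (Atom.pqs (Term.succ (num m)) cs us (Term.cons t ds),
               [Atom.pqs (num m) cs (Term.cons u us) ds,
                Atom.pq (Term.succ (num m)) cs us ds])
      (Or.inr (Or.inl ⟨num m, cs, us, u, t, ds, rfl⟩)) ?_
    intro b hb
    simp only [List.mem_cons, List.mem_singleton, List.not_mem_nil, or_false] at hb
    rcases hb with rfl | rfl
    · exact mem_LHM.mp hbody S hS
    · exact mem_LHM.mp hpq S hS

/-- Completeness of NQUEENS w.r.t. `S⁰ = S_pq ∪ S⁰_pqs ∪ { pqs(0,cs,us,ds) }`: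
every atom of `S⁰` belongs to the least Herbrand model of NQUEENS. -/
theorem nqueens_complete : Spq ∪ S0pqs ∪ SpqsZero ⊆ LHM NQprog := by
  rintro A ((hA | hA) | hA)
  · obtain ⟨i, cs, us, ds, k, rfl, hk, h1, h2, h3⟩ := hA
    exact spq_lhm k i cs us ds hk h1 h2 h3
  · obtain ⟨i, cs, us, t, ds, hi, rfl, hCo⟩ := hA
    exact s0_lhm i cs us t ds hi hCo
  · obtain ⟨cs, us, ds, rfl⟩ := hA
    rw [mem_LHM]; intro S hS
    exact hS _ (Or.inl ⟨_, _, _, rfl⟩) (by simp)
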